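/- Let ρ : ℝⁿ → ℝ≥0 be a continuous positive definite function (ρ(0) = 0 and ρ(x) > 0 for x ≠ 0). Then there exist a class-K∞ function α and a class-L function σ such that ρ(x) ≥ α(‖x‖)·σ(‖x‖) for all x ∈ ℝⁿ. -/

import Mathlib

open scoped NNReal

/-- Class-K∞: continuous, zero at zero, strictly increasing, unbounded. -/
def ClassKInf (α : ℝ≥0 → ℝ≥0) : Prop :=
  Continuous α ∧ α 0 = 0 ∧ StrictMono α ∧ Filter.Tendsto α Filter.atTop Filter.atTop

/-- Class-L: continuous, strictly decreasing, tends to 0 at ∞. -/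
def ClassL (σ : ℝ≥0 → ℝ≥0) : Prop :=
  Continuous σ ∧ StrictAnti σ ∧ Filter.Tendsto σ Filter.atTop (nhds 0)

open Set MeasureTheory

namespace PosDefAux

variable {n : ℕ} (ρ : EuclideanSpace ℝ (Fin n) → ℝ)

def Ann (s : ℝ) : Set (EuclideanSpace ℝ (Fin n)) := (fun x => ‖x‖) ⁻¹' Set.Icc s (1/s)

noncomputable def del (s : ℝ) : ℝ := sInf (insert 1 (ρ '' Ann s))

lemma bdd (hnonneg : ∀ x, 0 ≤ ρ x) (s : ℝ) : BddBelow (insert 1 (ρ '' Ann s)) := by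
  refine ⟨0, ?_⟩
  rintro y (rfl | ⟨x, -, rfl⟩)
  · norm_num
  · exact hnonneg x

lemma del_nonneg (hnonneg : ∀ x, 0 ≤ ρ x) (s : ℝ) : 0 ≤ del ρ s := by
  apply le_csInf ⟨1, mem_insert _ _⟩
  rintro y (rfl | ⟨x, -, rfl⟩)
  · norm_num
  · exact hnonneg x

lemma del_le_one (hnonneg : ∀ x, 0 ≤ ρ x) (s : ℝ) : del ρ s ≤ 1 :=
  csInf_le (bdd ρ hnonneg s) (mem_insert _ _)

lemma del_le (hnonneg : ∀ x, 0 ≤ ρ x) {s : ℝ} {x : EuclideanSpace ℝ (Fin n)}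
    (hx : x ∈ Ann s) : del ρ s ≤ ρ x :=
  csInf_le (bdd ρ hnonneg s) (mem_insert_of_mem _ ⟨x, hx, rfl⟩)

lemma isCompact_Ann (s : ℝ) : IsCompact (Ann (n := n) s) := by
  refine IsCompact.of_isClosed_subset (isCompact_closedBall (0 : EuclideanSpace ℝ (Fin n)) (1/s))
    (isClosed_Icc.preimage continuous_norm) ?_
  intro x hx
  simpa [Metric.mem_closedBall, dist_zero_right] using hx.2

lemma del_pos (hcont : Continuous ρ) (hpos : ∀ x, x ≠ 0 → 0 < ρ x) {s : ℝ} (hs : 0 < s) :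
    0 < del ρ s := by
  have hK : IsCompact (insert 1 (ρ '' Ann s)) := ((isCompact_Ann s).image hcont).insert 1
  have hmem := hK.sInf_mem (s := insert 1 (ρ '' Ann s)) ⟨1, mem_insert _ _⟩
  rcases hmem with h1 | ⟨x, hx, hx2⟩
  · rw [del, h1]; norm_num
  · rw [del, ← hx2]
    refine hpos x fun h => ?_
    rcases hx with ⟨hx1, -⟩
    simp only [h, norm_zero] at hx1
    exact absurd hs (by simpa using hx1)

lemma del_zero (h0 : ρ 0 = 0) (hnonneg : ∀ x, 0 ≤ ρ x) : del ρ 0 = 0 := by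
  have h1 : Ann (n := n) 0 = {0} := by
    ext x
    simp [Ann, norm_le_zero_iff, norm_nonneg, le_antisymm_iff]
  have : del ρ 0 ≤ 0 := by
    have := del_le ρ hnonneg (s := 0) (x := 0) (by simp [h1])
    rwa [h0] at this
  exact le_antisymm this (del_nonneg ρ hnonneg 0)

lemma del_mono (hnonneg : ∀ x, 0 ≤ ρ x) {s s' : ℝ} (hs : 0 < s) (hss : s ≤ s') :
    del ρ s ≤ del ρ s' := by
  apply csInf_le_csInf (bdd ρ hnonneg s) ⟨1, mem_insert _ _⟩
  apply insert_subset_insert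
  apply image_mono
  intro x hx
  exact ⟨hss.trans hx.1, hx.2.trans (one_div_le_one_div_of_le hs hss)⟩


noncomputable def uu (t : ℝ) : ℝ := del ρ (min (max t 0) 1)

lemma uu_mono (hnonneg : ∀ x, 0 ≤ ρ x) (h0 : ρ 0 = 0) : Monotone (uu ρ) := by
  intro t t' htt
  unfold uu
  rcases le_or_gt (max t 0) 0 with h | h
  · have : max t 0 = 0 := le_antisymm h (le_max_right _ _)
    rw [this]
    simp only [min_eq_left (zero_le_one' ℝ)]
    rw [del_zero ρ h0 hnonneg]
    exact del_nonneg ρ hnonneg _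
  · apply del_mono ρ hnonneg (lt_min h one_pos)
    exact min_le_min (max_le_max htt le_rfl) le_rfl

lemma uu_nonneg (hnonneg : ∀ x, 0 ≤ ρ x) (t : ℝ) : 0 ≤ uu ρ t := del_nonneg ρ hnonneg _

lemma uu_le_one (hnonneg : ∀ x, 0 ≤ ρ x) (t : ℝ) : uu ρ t ≤ 1 := del_le_one ρ hnonneg _

lemma uu_pos (hcont : Continuous ρ) (hpos : ∀ x, x ≠ 0 → 0 < ρ x) {t : ℝ} (ht : 0 < t) :
    0 < uu ρ t :=
  del_pos ρ hcont hpos (lt_min (lt_max_of_lt_left ht) one_pos)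

lemma uu_eq_del (hnonneg : ∀ x, 0 ≤ ρ x) {t : ℝ} (h1 : 0 ≤ t) (h2 : t ≤ 1) :
    uu ρ t = del ρ t := by
  unfold uu
  rw [max_eq_left h1, min_eq_left h2]

noncomputable def AA (r : ℝ) : ℝ := ∫ t in (0:ℝ)..r, uu ρ t

lemma uu_intble (hnonneg : ∀ x, 0 ≤ ρ x) (h0 : ρ 0 = 0) (a b : ℝ) :
    IntervalIntegrable (uu ρ) volume a b :=
  (uu_mono ρ hnonneg h0).intervalIntegrable

lemma AA_sub (hnonneg : ∀ x, 0 ≤ ρ x) (h0 : ρ 0 = 0) (a b : ℝ) :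
    AA ρ b - AA ρ a = ∫ t in a..b, uu ρ t := by
  unfold AA
  have := intervalIntegral.integral_add_adjacent_intervals (uu_intble ρ hnonneg h0 0 a)
    (uu_intble ρ hnonneg h0 a b)
  linarith

lemma integral_uu_le (hnonneg : ∀ x, 0 ≤ ρ x) (h0 : ρ 0 = 0) {a b : ℝ} (hab : a ≤ b) :
    ∫ t in a..b, uu ρ t ≤ (b - a) * uu ρ b := by
  have := intervalIntegral.integral_mono_on hab (uu_intble ρ hnonneg h0 a b)
    (intervalIntegrable_const (c := uu ρ b)) (fun x hx => uu_mono ρ hnonneg h0 hx.2)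
  simpa [smul_eq_mul] using this

lemma integral_uu_ge (hnonneg : ∀ x, 0 ≤ ρ x) (h0 : ρ 0 = 0) {a b : ℝ} (hab : a ≤ b) :
    (b - a) * uu ρ a ≤ ∫ t in a..b, uu ρ t := by
  have := intervalIntegral.integral_mono_on hab
    (intervalIntegrable_const (c := uu ρ a)) (uu_intble ρ hnonneg h0 a b)
    (fun x hx => uu_mono ρ hnonneg h0 hx.1)
  simpa [smul_eq_mul] using this

lemma AA_zero : AA ρ 0 = 0 := by simp [AA]

lemma AA_mono (hnonneg : ∀ x, 0 ≤ ρ x) (h0 : ρ 0 = 0) : Monotone (AA ρ) := by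
  intro a b hab
  rw [← sub_nonneg, AA_sub ρ hnonneg h0]
  calc (0:ℝ) = (b - a) * 0 := by ring
  _ ≤ (b - a) * uu ρ a := by
      apply mul_le_mul_of_nonneg_left (uu_nonneg ρ hnonneg a) (by linarith)
  _ ≤ _ := integral_uu_ge ρ hnonneg h0 hab

lemma AA_strictMonoOn (hcont : Continuous ρ) (hnonneg : ∀ x, 0 ≤ ρ x) (h0 : ρ 0 = 0)
    (hpos : ∀ x, x ≠ 0 → 0 < ρ x) : StrictMonoOn (AA ρ) (Set.Ici 0) := by
  intro a ha b hb hab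
  have hc : a < (a+b)/2 := by linarith
  have hc2 : (a+b)/2 < b := by linarith
  have h1 : AA ρ a ≤ AA ρ ((a+b)/2) := AA_mono ρ hnonneg h0 hc.le
  have h2 : AA ρ ((a+b)/2) < AA ρ b := by
    rw [← sub_pos, AA_sub ρ hnonneg h0]
    calc (0:ℝ) < (b - (a+b)/2) * uu ρ ((a+b)/2) := by
          apply mul_pos (by linarith)
          exact uu_pos ρ hcont hpos (by simp at ha; linarith)
    _ ≤ _ := integral_uu_ge ρ hnonneg h0 hc2.le
  exact h1.trans_lt h2

lemma AA_lipschitz (hnonneg : ∀ x, 0 ≤ ρ x) (h0 : ρ 0 = 0) (a b : ℝ) :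
    |AA ρ b - AA ρ a| ≤ |b - a| := by
  wlog hab : a ≤ b with H
  · exact (abs_sub_comm (AA ρ b) (AA ρ a)) ▸
      ((H ρ hnonneg h0 b a (le_of_not_ge hab)).trans (le_of_eq (abs_sub_comm _ _)))
  rw [AA_sub ρ hnonneg h0]
  rw [abs_of_nonneg (by linarith : (0:ℝ) ≤ b - a)]
  rw [abs_of_nonneg]
  · calc ∫ t in a..b, uu ρ t ≤ (b-a) * uu ρ b := integral_uu_le ρ hnonneg h0 hab
    _ ≤ (b-a) * 1 := mul_le_mul_of_nonneg_left (uu_le_one ρ hnonneg b) (by linarith)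
    _ = b - a := by ring
  · calc (0:ℝ) = (b-a) * 0 := by ring
    _ ≤ (b-a)*uu ρ a := mul_le_mul_of_nonneg_left (uu_nonneg ρ hnonneg a) (by linarith)
    _ ≤ _ := integral_uu_ge ρ hnonneg h0 hab

lemma AA_continuous (hnonneg : ∀ x, 0 ≤ ρ x) (h0 : ρ 0 = 0) : Continuous (AA ρ) := by
  have : LipschitzWith 1 (AA ρ) := by
    apply LipschitzWith.of_dist_le_mul
    intro a b
    rw [Real.dist_eq, Real.dist_eq, NNReal.coe_one, one_mul]
    exact AA_lipschitz ρ hnonneg h0 b a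
  exact this.continuous

lemma AA_le_del (hnonneg : ∀ x, 0 ≤ ρ x) (h0 : ρ 0 = 0) {r : ℝ} (h1 : 0 ≤ r) (h2 : r ≤ 1) :
    AA ρ r ≤ del ρ r := by
  calc AA ρ r ≤ (r - 0) * uu ρ r := by
        simpa [AA] using integral_uu_le ρ hnonneg h0 h1
  _ ≤ 1 * uu ρ r := by
        apply mul_le_mul_of_nonneg_right (by linarith) (uu_nonneg ρ hnonneg r)
  _ = del ρ r := by rw [one_mul, uu_eq_del ρ hnonneg h1 h2]

lemma AA_pos (hcont : Continuous ρ) (hnonneg : ∀ x, 0 ≤ ρ x) (h0 : ρ 0 = 0)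
    (hpos : ∀ x, x ≠ 0 → 0 < ρ x) {r : ℝ} (hr : 0 < r) : 0 < AA ρ r := by
  have := AA_strictMonoOn ρ hcont hnonneg h0 hpos (Set.mem_Ici.2 (le_refl 0)) (Set.mem_Ici.2 hr.le) hr
  rwa [AA_zero] at this

lemma AA_atTop (hcont : Continuous ρ) (hnonneg : ∀ x, 0 ≤ ρ x) (h0 : ρ 0 = 0)
    (hpos : ∀ x, x ≠ 0 → 0 < ρ x) :
    Filter.Tendsto (AA ρ) Filter.atTop Filter.atTop := by
  have hu1 : 0 < uu ρ 1 := uu_pos ρ hcont hpos one_pos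
  have hlin : Filter.Tendsto (fun r : ℝ => AA ρ 1 + (r - 1) * uu ρ 1) Filter.atTop Filter.atTop := by
    simpa [sub_eq_add_neg, Function.id_def] using Filter.tendsto_atTop_add_const_left _ (AA ρ 1)
      (Filter.Tendsto.atTop_mul_const hu1 (Filter.tendsto_atTop_add_const_right _ (-1)
        (Filter.tendsto_id (α := ℝ))))
  apply Filter.tendsto_atTop_mono' _ (Filter.eventually_atTop.2 ⟨1, fun r hr => ?_⟩) hlin
  have : AA ρ r - AA ρ 1 ≥ (r - 1) * uu ρ 1 := by
    rw [AA_sub ρ hnonneg h0]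
    exact integral_uu_ge ρ hnonneg h0 hr
  simp only [ge_iff_le] at this ⊢
  linarith


noncomputable def ww (r : ℝ) : ℝ := min 1 (del ρ (1 / max r 1) / AA ρ (max r 1))

variable (hcont : Continuous ρ) (hnonneg : ∀ x, 0 ≤ ρ x) (h0 : ρ 0 = 0)
    (hpos : ∀ x, x ≠ 0 → 0 < ρ x)

include hcont hnonneg h0 hpos

lemma ww_anti : Antitone (ww ρ) := by
  intro r r' hrr
  have h1 : (1:ℝ) ≤ max r 1 := le_max_right _ _
  have h1' : (1:ℝ) ≤ max r' 1 := le_max_right _ _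
  have hmm : max r 1 ≤ max r' 1 := max_le_max hrr le_rfl
  have hApos : 0 < AA ρ (max r 1) := AA_pos ρ hcont hnonneg h0 hpos (by linarith)
  apply min_le_min le_rfl
  apply div_le_div₀ (del_nonneg ρ hnonneg _) ?_ hApos (AA_mono ρ hnonneg h0 hmm)
  apply del_mono ρ hnonneg (by positivity)
  exact one_div_le_one_div_of_le (by linarith) hmm

lemma ww_pos (r : ℝ) : 0 < ww ρ r := by
  have h1 : (1:ℝ) ≤ max r 1 := le_max_right _ _
  apply lt_min one_pos
  exact div_pos (del_pos ρ hcont hpos (by positivity))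
    (AA_pos ρ hcont hnonneg h0 hpos (by linarith))

omit hcont hnonneg h0 hpos in
lemma ww_le_one (r : ℝ) : ww ρ r ≤ 1 := min_le_left _ _

omit hcont hnonneg h0 hpos in
lemma ww_le {r : ℝ} (hr : 1 ≤ r) : ww ρ r ≤ del ρ (1/r) / AA ρ r := by
  rw [ww, max_eq_left hr]
  exact min_le_right _ _

noncomputable def II (r : ℝ) : ℝ := ∫ t in r..(r+1), ww ρ t

lemma ww_intble (a b : ℝ) : IntervalIntegrable (ww ρ) volume a b :=
  (ww_anti ρ hcont hnonneg h0 hpos).intervalIntegrable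

lemma integral_ww_le {a b : ℝ} (hab : a ≤ b) :
    ∫ t in a..b, ww ρ t ≤ (b - a) * ww ρ a := by
  have := intervalIntegral.integral_mono_on hab (ww_intble ρ hcont hnonneg h0 hpos a b)
    (intervalIntegrable_const (c := ww ρ a))
    (fun x hx => ww_anti ρ hcont hnonneg h0 hpos hx.1)
  simpa [smul_eq_mul] using this

lemma integral_ww_ge {a b : ℝ} (hab : a ≤ b) :
    (b - a) * ww ρ b ≤ ∫ t in a..b, ww ρ t := by
  have := intervalIntegral.integral_mono_on hab
    (intervalIntegrable_const (c := ww ρ b)) (ww_intble ρ hcont hnonneg h0 hpos a b)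
    (fun x hx => ww_anti ρ hcont hnonneg h0 hpos hx.2)
  simpa [smul_eq_mul] using this

lemma II_le_ww (r : ℝ) : II ρ r ≤ ww ρ r := by
  have := integral_ww_le ρ hcont hnonneg h0 hpos (le_of_lt (lt_add_one r))
  simpa [II] using this

lemma II_pos (r : ℝ) : 0 < II ρ r := by
  have h := integral_ww_ge ρ hcont hnonneg h0 hpos (le_of_lt (lt_add_one r))
  have h2 := ww_pos ρ hcont hnonneg h0 hpos (r+1)
  rw [II]
  calc (0:ℝ) < (r + 1 - r) * ww ρ (r+1) := by
        rw [add_sub_cancel_left]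
        linarith
  _ ≤ _ := h

lemma II_le_one (r : ℝ) : II ρ r ≤ 1 :=
  (II_le_ww ρ hcont hnonneg h0 hpos r).trans (ww_le_one ρ r)

lemma II_sub (r r' : ℝ) :
    II ρ r' - II ρ r = (∫ t in (r+1)..(r'+1), ww ρ t) - ∫ t in r..r', ww ρ t := by
  have e1 := intervalIntegral.integral_add_adjacent_intervals
    (ww_intble ρ hcont hnonneg h0 hpos r r') (ww_intble ρ hcont hnonneg h0 hpos r' (r'+1))
  have e2 := intervalIntegral.integral_add_adjacent_intervals
    (ww_intble ρ hcont hnonneg h0 hpos r (r+1)) (ww_intble ρ hcont hnonneg h0 hpos (r+1) (r'+1))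
  rw [II, II]
  linarith

lemma II_anti : Antitone (II ρ) := by
  intro r r' hrr
  rw [← sub_nonpos, II_sub ρ hcont hnonneg h0 hpos, sub_nonpos]
  have hshift : (∫ t in (r+1)..(r'+1), ww ρ t) = ∫ t in r..r', ww ρ (t+1) :=
    (intervalIntegral.integral_comp_add_right (fun t => ww ρ t) 1).symm
  rw [hshift]
  apply intervalIntegral.integral_mono_on hrr
  · exact ((ww_anti ρ hcont hnonneg h0 hpos).comp_monotone
      (monotone_id.add_const 1)).intervalIntegrable
  · exact ww_intble ρ hcont hnonneg h0 hpos r r'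
  · intro x hx
    exact ww_anti ρ hcont hnonneg h0 hpos (by linarith : x ≤ x + 1)

lemma integral_ww_bounds {a b : ℝ} (hab : a ≤ b) :
    0 ≤ (∫ t in a..b, ww ρ t) ∧ (∫ t in a..b, ww ρ t) ≤ b - a := by
  constructor
  · have h := integral_ww_ge ρ hcont hnonneg h0 hpos hab
    have h2 := (ww_pos ρ hcont hnonneg h0 hpos b).le
    nlinarith
  · have h := integral_ww_le ρ hcont hnonneg h0 hpos hab
    have h2 := ww_le_one ρ a
    have h3 := (ww_pos ρ hcont hnonneg h0 hpos a).le
    nlinarith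

lemma II_lipschitz (r r' : ℝ) : |II ρ r' - II ρ r| ≤ |r' - r| := by
  wlog hrr : r ≤ r' with H
  · exact (abs_sub_comm (II ρ r') (II ρ r)) ▸
      ((H ρ hcont hnonneg h0 hpos r' r (le_of_not_ge hrr)).trans (le_of_eq (abs_sub_comm _ _)))
  rw [II_sub ρ hcont hnonneg h0 hpos]
  obtain ⟨h1, h2⟩ := integral_ww_bounds ρ hcont hnonneg h0 hpos hrr
  obtain ⟨h3, h4⟩ := integral_ww_bounds ρ hcont hnonneg h0 hpos
    (by linarith : r + 1 ≤ r' + 1)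
  rw [abs_of_nonneg (by linarith : (0:ℝ) ≤ r' - r)]
  apply abs_le.mpr
  exact ⟨by linarith, by linarith⟩

lemma II_continuous : Continuous (II ρ) := by
  have : LipschitzWith 1 (II ρ) := by
    apply LipschitzWith.of_dist_le_mul
    intro a b
    rw [Real.dist_eq, Real.dist_eq, NNReal.coe_one, one_mul]
    exact II_lipschitz ρ hcont hnonneg h0 hpos b a
  exact this.continuous

noncomputable def SS (r : ℝ) : ℝ := II ρ r / (1 + r)

lemma SS_pos {r : ℝ} (hr : 0 ≤ r) : 0 < SS ρ r :=
  div_pos (II_pos ρ hcont hnonneg h0 hpos r) (by linarith)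

lemma SS_le_II {r : ℝ} (hr : 0 ≤ r) : SS ρ r ≤ II ρ r := by
  rw [SS]
  calc II ρ r / (1 + r) ≤ II ρ r / 1 :=
        div_le_div_of_nonneg_left (II_pos ρ hcont hnonneg h0 hpos r).le one_pos (by linarith)
  _ = II ρ r := div_one _

lemma SS_le_one {r : ℝ} (hr : 0 ≤ r) : SS ρ r ≤ 1 :=
  (SS_le_II ρ hcont hnonneg h0 hpos hr).trans (II_le_one ρ hcont hnonneg h0 hpos r)

lemma SS_le_ww {r : ℝ} (hr : 0 ≤ r) : SS ρ r ≤ ww ρ r :=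
  (SS_le_II ρ hcont hnonneg h0 hpos hr).trans (II_le_ww ρ hcont hnonneg h0 hpos r)

lemma SS_strictAntiOn : StrictAntiOn (SS ρ) (Set.Ici 0) := by
  intro r hr r' hr' hrr
  simp only [Set.mem_Ici] at hr hr'
  calc SS ρ r' = II ρ r' / (1 + r') := rfl
  _ ≤ II ρ r / (1 + r') := by
      apply div_le_div_of_nonneg_right ?_ (by linarith)
      exact II_anti ρ hcont hnonneg h0 hpos hrr.le
  _ < II ρ r / (1 + r) :=
      div_lt_div_of_pos_left (II_pos ρ hcont hnonneg h0 hpos r) (by linarith) (by linarith)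
  _ = SS ρ r := rfl

lemma SS_le_inv {r : ℝ} (hr : 0 ≤ r) : SS ρ r ≤ 1 / (1 + r) :=
  div_le_div_of_nonneg_right (II_le_one ρ hcont hnonneg h0 hpos r) (by linarith)

end PosDefAux

open PosDefAux

/-- A continuous positive definite function `ρ : ℝⁿ → ℝ≥0` admits a lower bound of
the form `α(‖x‖) σ(‖x‖)` with `α` class-K∞ and `σ` class-L. -/
theorem posdef_lower_bound (n : ℕ) (ρ : EuclideanSpace ℝ (Fin n) → ℝ)
    (hcont : Continuous ρ) (hnonneg : ∀ x, 0 ≤ ρ x) (h0 : ρ 0 = 0)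
    (hpos : ∀ x, x ≠ 0 → 0 < ρ x) :
    ∃ α σ : ℝ≥0 → ℝ≥0, ClassKInf α ∧ ClassL σ ∧
      ∀ x : EuclideanSpace ℝ (Fin n), ((α ‖x‖₊ * σ ‖x‖₊ : ℝ≥0) : ℝ) ≤ ρ x := by
  refine ⟨fun r => (AA ρ r).toNNReal, fun r => (SS ρ r).toNNReal, ?_, ?_, ?_⟩
  · refine ⟨?_, ?_, ?_, ?_⟩
    · exact continuous_real_toNNReal.comp
        ((AA_continuous ρ hnonneg h0).comp NNReal.continuous_coe)
    · simp [AA_zero]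
    · intro r r' hrr
      have hr' : (0:ℝ) < (r':ℝ) := lt_of_le_of_lt r.coe_nonneg (NNReal.coe_lt_coe.2 hrr)
      have hAA : AA ρ (r:ℝ) < AA ρ (r':ℝ) :=
        AA_strictMonoOn ρ hcont hnonneg h0 hpos r.coe_nonneg (le_of_lt hr')
          (NNReal.coe_lt_coe.2 hrr)
      have hpos' : 0 < AA ρ (r':ℝ) := AA_pos ρ hcont hnonneg h0 hpos hr'
      exact (Real.toNNReal_lt_toNNReal_iff hpos').2 hAA
    · rw [Filter.tendsto_atTop]
      intro b
      have h1 : Filter.Tendsto (fun r : ℝ≥0 => AA ρ (r:ℝ)) Filter.atTop Filter.atTop :=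
        (AA_atTop ρ hcont hnonneg h0 hpos).comp (NNReal.tendsto_coe_atTop.2 Filter.tendsto_id)
      filter_upwards [h1.eventually_ge_atTop (b:ℝ)] with r hr
      rw [Real.le_toNNReal_iff_coe_le (le_trans b.coe_nonneg hr)]
      exact hr
  · refine ⟨?_, ?_, ?_⟩
    · have : Continuous fun r : ℝ≥0 => SS ρ (r:ℝ) := by
        apply Continuous.div
        · exact (II_continuous ρ hcont hnonneg h0 hpos).comp NNReal.continuous_coe
        · exact continuous_const.add NNReal.continuous_coe
        · intro r
          have := r.coe_nonneg
          positivity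
      exact continuous_real_toNNReal.comp this
    · intro r r' hrr
      have hSS : SS ρ (r':ℝ) < SS ρ (r:ℝ) :=
        SS_strictAntiOn ρ hcont hnonneg h0 hpos r.coe_nonneg r'.coe_nonneg
          (NNReal.coe_lt_coe.2 hrr)
      have hpos' : 0 < SS ρ (r:ℝ) := SS_pos ρ hcont hnonneg h0 hpos r.coe_nonneg
      exact (Real.toNNReal_lt_toNNReal_iff hpos').2 hSS
    · have h1 : Filter.Tendsto (fun r : ℝ≥0 => SS ρ (r:ℝ)) Filter.atTop (nhds 0) := by
        apply tendsto_of_tendsto_of_tendsto_of_le_of_le (g := fun _ => (0:ℝ))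
          (h := fun r : ℝ≥0 => 1 / (1 + (r:ℝ)))
        · exact tendsto_const_nhds
        · have h2 : Filter.Tendsto (fun r : ℝ≥0 => 1 + (r:ℝ)) Filter.atTop Filter.atTop :=
            Filter.tendsto_atTop_add_const_left _ 1 (NNReal.tendsto_coe_atTop.2 Filter.tendsto_id)
          simpa [one_div, Pi.inv_def] using h2.inv_tendsto_atTop
        · exact fun r => (SS_pos ρ hcont hnonneg h0 hpos r.coe_nonneg).le
        · exact fun r => SS_le_inv ρ hcont hnonneg h0 hpos r.coe_nonneg
      have h2 : Filter.Tendsto Real.toNNReal (nhds 0) (nhds 0) := by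
        have := continuous_real_toNNReal.continuousAt (x := (0:ℝ))
        simpa [Real.toNNReal_zero] using this.tendsto
      exact h2.comp h1
  · intro x
    set r : ℝ := ‖x‖ with hr
    have hrnn : (‖x‖₊ : ℝ) = r := rfl
    have hr0 : 0 ≤ r := norm_nonneg x
    have hAnonneg : 0 ≤ AA ρ r := by
      have := AA_mono ρ hnonneg h0 hr0
      rwa [AA_zero] at this
    have hSnonneg : 0 ≤ SS ρ r := (SS_pos ρ hcont hnonneg h0 hpos hr0).le
    have hcoe : ((((AA ρ (‖x‖₊:ℝ)).toNNReal * (SS ρ (‖x‖₊:ℝ)).toNNReal : ℝ≥0)) : ℝ)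
        = AA ρ r * SS ρ r := by
      push_cast
      rw [Real.coe_toNNReal _ hAnonneg, Real.coe_toNNReal _ hSnonneg]
    rw [hcoe]
    rcases eq_or_lt_of_le hr0 with hr0' | hr0'
    · have hx0 : x = 0 := norm_eq_zero.1 hr0'.symm
      rw [← hr0', AA_zero, zero_mul, hx0, h0]
    rcases le_or_gt r 1 with hr1 | hr1
    · have hxAnn : x ∈ Ann (n := n) r := by
        constructor
        · exact le_refl r
        · show ‖x‖ ≤ 1 / r
          rw [le_div_iff₀ hr0']
          nlinarith
      have h1 : AA ρ r ≤ del ρ r := AA_le_del ρ hnonneg h0 hr0 hr1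
      have h2 : del ρ r ≤ ρ x := del_le ρ hnonneg hxAnn
      have h3 : SS ρ r ≤ 1 := SS_le_one ρ hcont hnonneg h0 hpos hr0
      nlinarith
    · have hinv : (0:ℝ) < 1 / r := by positivity
      have hxAnn : x ∈ Ann (n := n) (1/r) := by
        constructor
        · show 1 / r ≤ ‖x‖
          rw [← hr]
          calc 1/r ≤ 1/1 := one_div_le_one_div_of_le one_pos hr1.le
          _ = 1 := by norm_num
          _ ≤ r := hr1.le
        · show ‖x‖ ≤ 1 / (1/r)
          rw [← hr, one_div_one_div]
      have h2 : del ρ (1/r) ≤ ρ x := del_le ρ hnonneg hxAnn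
      have hApos : 0 < AA ρ r := AA_pos ρ hcont hnonneg h0 hpos hr0'
      have h3 : SS ρ r ≤ ww ρ r := SS_le_ww ρ hcont hnonneg h0 hpos hr0
      have h4 : ww ρ r ≤ del ρ (1/r) / AA ρ r := ww_le ρ hr1.le
      have h5 : AA ρ r * SS ρ r ≤ AA ρ r * (del ρ (1/r) / AA ρ r) := by
        apply mul_le_mul_of_nonneg_left (h3.trans h4) hApos.le
      rw [mul_div_cancel₀ _ (ne_of_gt hApos)] at h5
      linarith
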